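/- arXiv:1611.08320 — 3 statements merged into one kernel-verified Lean document; each statement's English description precedes it below -/
import Mathlib

section
/- (Van der Corput, first-derivative case) Suppose φ : [a,b] → ℝ is C¹ with φ' monotone and |φ'(x)| ≥ 1 for all x ∈ (a,b), and ψ : [a,b] → ℂ is C¹. Then |∫_a^b e^{iλφ(x)} ψ(x) dx| ≤ c·λ^{-1}·( |ψ(b)| + ∫_a^b |ψ'(x)| dx ) for all λ > 0, with an absolute constant c. -/
open intervalIntegral
open MeasureTheory Set

lemma lem_set (a b : ℝ) (E E' : ℝ → ℂ) (hE : ContinuousOn E (Set.Icc a b))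
    (hE' : ContinuousOn E' (Set.Icc a b))
    (hd : ∀ t ∈ Set.Ioo a b, HasDerivAt E (E' t) t)
    (hEb : ∀ t ∈ Set.Icc a b, ‖E t‖ ≤ 1)
    (S : Set ℝ) (hSsub : S ⊆ Set.Ioo a b) (hSord : Set.OrdConnected S) :
    ‖∫ t in S, E' t‖ ≤ 2 := by
  rcases S.eq_empty_or_nonempty with rfl | hne
  · simp
  have hbdd : BddBelow S := ⟨a, fun t ht => (hSsub ht).1.le⟩
  have hbdd' : BddAbove S := ⟨b, fun t ht => (hSsub ht).2.le⟩
  set u := sInf S with hu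
  set v := sSup S with hv
  have hau : a ≤ u := le_csInf hne fun t ht => (hSsub ht).1.le
  have hvb : v ≤ b := csSup_le hne fun t ht => (hSsub ht).2.le
  have huv : u ≤ v := by
    obtain ⟨t, ht⟩ := hne
    exact le_trans (csInf_le hbdd ht) (le_csSup hbdd' ht)
  have hsub1 : S ⊆ Set.Icc u v := fun t ht => ⟨csInf_le hbdd ht, le_csSup hbdd' ht⟩
  have hsub2 : Set.Ioo u v ⊆ S := by
    intro t ht
    obtain ⟨t1, ht1, ht1'⟩ := exists_lt_of_csInf_lt hne ht.1
    obtain ⟨t2, ht2, ht2'⟩ := exists_lt_of_lt_csSup hne ht.2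
    exact hSord.out ht1 ht2 ⟨ht1'.le, ht2'.le⟩
  have hae : S =ᵐ[volume] Set.Ioo u v := by
    rw [MeasureTheory.ae_eq_set]
    constructor
    · refine measure_mono_null (fun t ht => ?_) (?_ : volume ({u, v} : Set ℝ) = 0)
      · rcases (hsub1 ht.1).1.lt_or_eq with h1 | h1
        · rcases (hsub1 ht.1).2.lt_or_eq with h2 | h2
          · exact absurd ⟨h1, h2⟩ ht.2
          · exact Or.inr h2
        · exact Or.inl h1.symm
      · exact Set.Finite.measure_zero (Set.toFinite _) _
    · simp [Set.diff_eq_empty.2 hsub2]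
  rw [setIntegral_congr_set hae]
  have hIccsub : Set.Icc u v ⊆ Set.Icc a b := Set.Icc_subset_Icc hau hvb
  have : ∫ t in Set.Ioo u v, E' t = ∫ t in u..v, E' t := by
    rw [intervalIntegral.integral_of_le huv, MeasureTheory.integral_Ioc_eq_integral_Ioo]
  rw [this, intervalIntegral.integral_eq_sub_of_hasDeriv_right_of_le huv
      (hE.mono hIccsub)
      (fun t ht => (hd t ⟨lt_of_le_of_lt hau ht.1, lt_of_lt_of_le ht.2 hvb⟩).hasDerivWithinAt)
      ((hE'.mono ?_).intervalIntegrable)]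
  · calc ‖E v - E u‖ ≤ ‖E v‖ + ‖E u‖ := norm_sub_le _ _
      _ ≤ 1 + 1 := add_le_add (hEb v ⟨hau.trans huv, hvb⟩) (hEb u ⟨hau, huv.trans hvb⟩)
      _ = 2 := by norm_num
  · rw [Set.uIcc_of_le huv]; exact hIccsub

lemma lem_key (a b : ℝ) (hab : a ≤ b) (φ : ℝ → ℝ) (lam : ℝ) (hlam : 0 < lam)
    (hφ : ContDiffOn ℝ 1 φ (Set.Icc a b))
    (hmono : MonotoneOn (deriv φ) (Set.Icc a b) ∨ AntitoneOn (deriv φ) (Set.Icc a b))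
    (hpos : ∀ x ∈ Set.Ioo a b, 1 ≤ deriv φ x) :
    ‖∫ t in a..b, Complex.exp (Complex.I * lam * (φ t))‖ ≤ 2 * lam⁻¹ := by
  rcases eq_or_lt_of_le hab with rfl | hab
  · simp; positivity
  set D := derivWithin φ (Set.Icc a b) with hD
  have hDcont : ContinuousOn D (Set.Icc a b) :=
    hφ.continuousOn_derivWithin (uniqueDiffOn_Icc hab) le_rfl
  have hDeq : ∀ t ∈ Set.Ioo a b, deriv φ t = D t := fun t ht =>
    (derivWithin_of_mem_nhds (Icc_mem_nhds ht.1 ht.2)).symm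
  have hder : ∀ t ∈ Set.Ioo a b, HasDerivAt φ (D t) t := by
    intro t ht
    have h1 : DifferentiableWithinAt ℝ φ (Set.Icc a b) t :=
      (hφ.differentiableOn one_ne_zero) t (Set.Ioo_subset_Icc_self ht)
    have h2 := (h1.differentiableAt (Icc_mem_nhds ht.1 ht.2)).hasDerivAt
    rwa [hDeq t ht] at h2
  set E : ℝ → ℂ := fun t => Complex.exp (Complex.I * lam * (φ t)) with hE
  set E' : ℝ → ℂ := fun t => Complex.I * lam * (D t) * E t with hE'
  have hφc : ContinuousOn (fun t => ((φ t : ℝ) : ℂ)) (Set.Icc a b) :=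
    Complex.continuous_ofReal.comp_continuousOn hφ.continuousOn
  have hEcont : ContinuousOn E (Set.Icc a b) :=
    Complex.continuous_exp.comp_continuousOn (continuousOn_const.mul hφc)
  have hE'cont : ContinuousOn E' (Set.Icc a b) :=
    ((continuousOn_const.mul (Complex.continuous_ofReal.comp_continuousOn hDcont)).mul hEcont)
  have hEd : ∀ t ∈ Set.Ioo a b, HasDerivAt E (E' t) t := by
    intro t ht
    have h1 : HasDerivAt (fun t => ((φ t : ℝ) : ℂ)) (D t) t := (hder t ht).ofReal_comp
    have h2 := (h1.const_mul (Complex.I * lam)).cexp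
    convert h2 using 1
    simp only [hE', hE]
    ring
  have hEnorm : ∀ t : ℝ, ‖E t‖ = 1 := by
    intro t
    rw [hE]
    simp [Complex.norm_exp]
  have hD1 : ∀ t ∈ Set.Icc a b, 1 ≤ D t := by
    intro t ht
    have hc : ContinuousWithinAt D (Set.Ioo a b) t :=
      (hDcont t ht).mono Set.Ioo_subset_Icc_self
    have hne : (nhdsWithin t (Set.Ioo a b)).NeBot := by
      rw [← mem_closure_iff_nhdsWithin_neBot, closure_Ioo hab.ne]
      exact ht
    exact ge_of_tendsto hc (eventually_nhdsWithin_of_forall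
      (fun x hx => (hDeq x hx) ▸ hpos x hx))
  set g : ℝ → ℝ := fun t => (deriv φ t)⁻¹ with hg
  have hgD : ∀ t ∈ Set.Ioo a b, g t = (D t)⁻¹ := fun t ht => by simp only [hg]; rw [hDeq t ht]
  have hgpos : ∀ t ∈ Set.Ioo a b, 0 < g t := by
    intro t ht
    rw [hgD t ht]
    exact inv_pos.2 (lt_of_lt_of_le one_pos (hD1 t (Set.Ioo_subset_Icc_self ht)))
  have hgle : ∀ t ∈ Set.Ioo a b, g t ≤ 1 := by
    intro t ht
    rw [hgD t ht]
    exact inv_le_one_of_one_le₀ (hD1 t (Set.Ioo_subset_Icc_self ht))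
  have hgm : MonotoneOn g (Set.Ioo a b) ∨ AntitoneOn g (Set.Ioo a b) := by
    rcases hmono with hm | hm
    · right
      intro x hx y hy hxy
      have h1 : (1:ℝ) ≤ deriv φ x := hpos x hx
      exact inv_anti₀ (lt_of_lt_of_le one_pos h1)
        (hm (Set.Ioo_subset_Icc_self hx) (Set.Ioo_subset_Icc_self hy) hxy)
    · left
      intro x hx y hy hxy
      have h1 : (1:ℝ) ≤ deriv φ y := hpos y hy
      exact inv_anti₀ (lt_of_lt_of_le one_pos h1)
        (hm (Set.Ioo_subset_Icc_self hx) (Set.Ioo_subset_Icc_self hy) hxy)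
  -- reduce to integral over Ioo
  have h1 : ∫ t in a..b, E t = ∫ t in Set.Ioo a b, E t := by
    rw [intervalIntegral.integral_of_le hab.le, MeasureTheory.integral_Ioc_eq_integral_Ioo]
  -- pointwise identity
  have hIl : (Complex.I * lam) ≠ 0 := by
    simp [Complex.ext_iff, hlam.ne']
  have h2 : ∀ t ∈ Set.Ioo a b, E t = (Complex.I * lam)⁻¹ • ((g t : ℝ) • E' t) := by
    intro t ht
    have hD0 : ((D t : ℝ) : ℂ) ≠ 0 := by
      simp only [ne_eq, Complex.ofReal_eq_zero]
      exact (lt_of_lt_of_le one_pos (hD1 t (Set.Ioo_subset_Icc_self ht))).ne'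
    rw [show g t = (D t)⁻¹ from hgD t ht]
    simp only [hE', smul_eq_mul, Complex.real_smul, Complex.ofReal_inv]
    field_simp
    rw [mul_div_assoc, div_self (by exact_mod_cast hlam.ne'), mul_one]
  rw [h1, MeasureTheory.setIntegral_congr_fun measurableSet_Ioo h2,
    MeasureTheory.integral_smul]
  have hnorm : ‖(Complex.I * (lam:ℂ))⁻¹‖ = lam⁻¹ := by
    rw [norm_inv]
    simp [Complex.norm_real, abs_of_pos hlam]
  rw [norm_smul, hnorm]
  have hbound : ‖∫ t in Set.Ioo a b, (g t : ℝ) • E' t‖ ≤ 2 := by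
    set h : ℝ → ℝ → ℂ := fun t s => if s ≤ g t then E' t else 0 with hh
    obtain ⟨M, hM⟩ := IsCompact.exists_bound_of_continuousOn isCompact_Icc hE'cont
    have hM0 : 0 ≤ M := le_trans (norm_nonneg _) (hM a (Set.left_mem_Icc.2 hab.le))
    have mset : MeasurableSet {p : ℝ × ℝ | p.2 ≤ g p.1} :=
      measurableSet_le measurable_snd ((measurable_deriv φ).inv.comp measurable_fst)
    set pm := (volume.restrict (Set.Ioo a b)).prod (volume.restrict (Set.Ioc (0:ℝ) 1)) with hpm
    have huncurry : Function.uncurry h =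
        Set.indicator {p : ℝ × ℝ | p.2 ≤ g p.1} (fun p => E' p.1) := by
      funext p
      simp only [Function.uncurry, hh, Set.indicator, Set.mem_setOf_eq]
    have hAESM : AEStronglyMeasurable (Function.uncurry h) pm := by
      rw [huncurry]
      exact (((hE'cont.mono Set.Ioo_subset_Icc_self).aestronglyMeasurable
        measurableSet_Ioo).comp_fst).indicator mset
    have hae1 : ∀ᵐ p : ℝ × ℝ ∂pm, p.1 ∈ Set.Ioo a b := by
      rw [ae_iff]
      have hset : {p : ℝ × ℝ | ¬ p.1 ∈ Set.Ioo a b} = (Set.Ioo a b)ᶜ ×ˢ Set.univ := by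
        ext p; simp
      rw [hset, hpm, Measure.prod_prod, Measure.restrict_apply (measurableSet_Ioo.compl)]
      simp
    have hInt : Integrable (Function.uncurry h) pm := by
      refine Integrable.mono' (integrable_const M) hAESM ?_
      filter_upwards [hae1] with p hp
      by_cases hc : p.2 ≤ g p.1
      · simp only [Function.uncurry, hh, if_pos hc]
        exact hM p.1 (Set.Ioo_subset_Icc_self hp)
      · simp only [Function.uncurry, hh, if_neg hc]
        simpa using hM0
    have stepA : ∀ t ∈ Set.Ioo a b, (g t : ℝ) • E' t = ∫ s in Set.Ioc (0:ℝ) 1, h t s := by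
      intro t ht
      have heq : ∀ s : ℝ, h t s = Set.indicator (Set.Iic (g t)) (fun _ => E' t) s := by
        intro s
        simp only [hh, Set.indicator, Set.mem_Iic]
      calc (g t : ℝ) • E' t
          = ((volume (Set.Ioc (0:ℝ) 1 ∩ Set.Iic (g t))).toReal) • E' t := by
            rw [Set.Ioc_inter_Iic, min_eq_right (hgle t ht), Real.volume_Ioc,
              ENNReal.toReal_ofReal (by linarith [hgpos t ht])]
            norm_num
        _ = ∫ s in Set.Ioc (0:ℝ) 1 ∩ Set.Iic (g t), E' t := (setIntegral_const _).symm
        _ = ∫ s in Set.Ioc (0:ℝ) 1, Set.indicator (Set.Iic (g t)) (fun _ => E' t) s :=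
            (setIntegral_indicator measurableSet_Iic).symm
        _ = ∫ s in Set.Ioc (0:ℝ) 1, h t s := by simp only [heq]
    have stepB : ∀ s : ℝ, ‖∫ t in Set.Ioo a b, h t s‖ ≤ 2 := by
      intro s
      have msetT : MeasurableSet {t : ℝ | s ≤ g t} :=
        measurableSet_le measurable_const (measurable_deriv φ).inv
      have heq : (fun t => h t s) = Set.indicator {t : ℝ | s ≤ g t} E' := by
        funext t
        simp only [hh, Set.indicator, Set.mem_setOf_eq]
      rw [heq, MeasureTheory.integral_indicator msetT,
        MeasureTheory.Measure.restrict_restrict msetT]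
      refine lem_set a b E E' hEcont hE'cont hEd (fun t ht => le_of_eq (hEnorm t))
        ({t : ℝ | s ≤ g t} ∩ Set.Ioo a b) Set.inter_subset_right ?_
      refine ⟨fun x hx y hy z hz => ⟨?_, ?_⟩⟩
      · have hzIoo : z ∈ Set.Ioo a b := ⟨hx.2.1.trans_le hz.1, lt_of_le_of_lt hz.2 hy.2.2⟩
        rcases hgm with hm | hm
        · exact le_trans hx.1 (hm hx.2 hzIoo hz.1)
        · exact le_trans hy.1 (hm hzIoo hy.2 hz.2)
      · exact ⟨hx.2.1.trans_le hz.1, lt_of_le_of_lt hz.2 hy.2.2⟩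
    calc ‖∫ t in Set.Ioo a b, (g t : ℝ) • E' t‖
        = ‖∫ t in Set.Ioo a b, ∫ s in Set.Ioc (0:ℝ) 1, h t s‖ := by
          rw [MeasureTheory.setIntegral_congr_fun measurableSet_Ioo stepA]
      _ = ‖∫ s in Set.Ioc (0:ℝ) 1, ∫ t in Set.Ioo a b, h t s‖ := by
          rw [MeasureTheory.integral_integral_swap hInt]
      _ ≤ 2 * (volume (Set.Ioc (0:ℝ) 1)).toReal := by
          refine MeasureTheory.norm_setIntegral_le_of_norm_le_const ?_ (fun s _ => stepB s)
          · simp [Real.volume_Ioc]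
      _ = 2 := by simp [Real.volume_Ioc]
  calc lam⁻¹ * ‖∫ t in Set.Ioo a b, (g t : ℝ) • E' t‖ ≤ lam⁻¹ * 2 := by
        exact mul_le_mul_of_nonneg_left hbound (by positivity)
    _ = 2 * lam⁻¹ := by ring

lemma lem_key' (a b : ℝ) (hab : a ≤ b) (φ : ℝ → ℝ) (lam : ℝ) (hlam : 0 < lam)
    (hφ : ContDiffOn ℝ 1 φ (Set.Icc a b))
    (hmono : MonotoneOn (deriv φ) (Set.Icc a b) ∨ AntitoneOn (deriv φ) (Set.Icc a b))
    (hpos : ∀ x ∈ Set.Ioo a b, 1 ≤ |deriv φ x|) :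
    ‖∫ t in a..b, Complex.exp (Complex.I * lam * (φ t))‖ ≤ 2 * lam⁻¹ := by
  rcases eq_or_lt_of_le hab with rfl | hlt
  · rw [intervalIntegral.integral_same, norm_zero]; positivity
  have hDcont : ContinuousOn (deriv φ) (Set.Ioo a b) := by
    have h1 : ContinuousOn (derivWithin φ (Set.Icc a b)) (Set.Icc a b) :=
      hφ.continuousOn_derivWithin (uniqueDiffOn_Icc hlt) le_rfl
    refine ContinuousOn.congr (h1.mono Set.Ioo_subset_Icc_self) ?_
    intro t ht
    exact (derivWithin_of_mem_nhds (f := φ) (Icc_mem_nhds ht.1 ht.2)).symm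
  by_cases hsign : ∀ x ∈ Set.Ioo a b, 1 ≤ deriv φ x
  · exact lem_key a b hab φ lam hlam hφ hmono hsign
  · push_neg at hsign
    obtain ⟨x₀, hx₀, hx₀'⟩ := hsign
    have hx₀neg : deriv φ x₀ ≤ -1 := by
      rcases le_abs'.1 (hpos x₀ hx₀) with h | h
      · linarith
      · linarith
    have hneg : ∀ x ∈ Set.Ioo a b, deriv φ x ≤ -1 := by
      intro x hx
      by_contra hcon
      push_neg at hcon
      have h1 : 1 ≤ deriv φ x := by
        rcases le_abs'.1 (hpos x hx) with h | h
        · linarith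
        · exact h
      have hIoo : Set.uIcc x₀ x ⊆ Set.Ioo a b :=
        Set.OrdConnected.uIcc_subset Set.ordConnected_Ioo hx₀ hx
      have h0 : (0:ℝ) ∈ Set.uIcc (deriv φ x₀) (deriv φ x) := by
        rw [Set.mem_uIcc]
        left
        constructor <;> linarith
      obtain ⟨z, hz, hz'⟩ := intermediate_value_uIcc (hDcont.mono hIoo) h0
      have := hpos z (hIoo hz)
      rw [hz', abs_zero] at this
      linarith
    -- apply lem_key to -φ and conjugate
    have hder_neg : deriv (fun t => -(φ t)) = fun x => -(deriv φ x) := by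
      funext x
      exact deriv.neg
    have hres := lem_key a b hab (fun t => -(φ t)) lam hlam hφ.neg ?_ ?_
    · have hconj : ∀ t : ℝ, Complex.exp (Complex.I * lam * (φ t)) =
          (starRingEnd ℂ) (Complex.exp (Complex.I * lam * (-(φ t) : ℝ))) := by
        intro t
        rw [← Complex.exp_conj]
        congr 1
        simp [Complex.ext_iff]
      have : ∫ t in a..b, Complex.exp (Complex.I * lam * (φ t)) =
          (starRingEnd ℂ) (∫ t in a..b, Complex.exp (Complex.I * lam * ((-(φ t) : ℝ)))) := by
        rw [intervalIntegral.integral_of_le hab, intervalIntegral.integral_of_le hab,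
          ← integral_conj]
        exact MeasureTheory.integral_congr_ae (Filter.Eventually.of_forall (fun t => hconj t))
      rw [this, RCLike.norm_conj]
      exact hres
    · rw [hder_neg]
      rcases hmono with hm | hm
      · right
        intro u hu v hv huv
        simpa using neg_le_neg (hm hu hv huv)
      · left
        intro u hu v hv huv
        simpa using neg_le_neg (hm hu hv huv)
    · intro x hx
      rw [hder_neg]
      show (1:ℝ) ≤ -(deriv φ x)
      linarith [hneg x hx]

theorem stmt_11 :
    ∃ c : ℝ, 0 < c ∧ ∀ (a b : ℝ), a < b → ∀ (φ : ℝ → ℝ) (ψ : ℝ → ℂ) (lam : ℝ),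
      0 < lam →
      ContDiffOn ℝ 1 φ (Set.Icc a b) →
      (MonotoneOn (deriv φ) (Set.Icc a b) ∨ AntitoneOn (deriv φ) (Set.Icc a b)) →
      (∀ x ∈ Set.Ioo a b, 1 ≤ |deriv φ x|) →
      ContDiffOn ℝ 1 ψ (Set.Icc a b) →
      ‖∫ x in a..b, Complex.exp (Complex.I * lam * (φ x)) * ψ x‖ ≤
        c * lam⁻¹ * (‖ψ b‖ + ∫ x in a..b, ‖deriv ψ x‖) := by
  refine ⟨2, two_pos, ?_⟩
  intro a b hab φ ψ lam hlam hφ hmono habs hψ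
  set E : ℝ → ℂ := fun t => Complex.exp (Complex.I * lam * (φ t)) with hE
  have hEcont : ContinuousOn E (Set.Icc a b) :=
    Complex.continuous_exp.comp_continuousOn
      (continuousOn_const.mul (Complex.continuous_ofReal.comp_continuousOn hφ.continuousOn))
  set F : ℝ → ℂ := fun x => ∫ t in a..x, E t with hF
  have huIcc : Set.uIcc a b = Set.Icc a b := Set.uIcc_of_le hab.le
  have hEint : IntervalIntegrable E volume a b := by
    apply ContinuousOn.intervalIntegrable
    rwa [huIcc]
  have hFkey : ∀ x ∈ Set.Icc a b, ‖F x‖ ≤ 2 * lam⁻¹ := by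
    intro x hx
    exact lem_key' a x hx.1 φ lam hlam (hφ.mono (Set.Icc_subset_Icc_right hx.2))
      (hmono.imp (fun h => h.mono (Set.Icc_subset_Icc_right hx.2))
        (fun h => h.mono (Set.Icc_subset_Icc_right hx.2)))
      (fun t ht => habs t ⟨ht.1, lt_of_lt_of_le ht.2 hx.2⟩)
  have hFcont : ContinuousOn F (Set.Icc a b) := by
    rw [← huIcc]
    refine intervalIntegral.continuousOn_primitive_interval ?_
    rw [huIcc]
    exact hEcont.integrableOn_compact isCompact_Icc
  have hEIoo : ContinuousOn E (Set.Ioo a b) := hEcont.mono Set.Ioo_subset_Icc_self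
  have hFder : ∀ x ∈ Set.Ioo a b, HasDerivAt F (E x) x := by
    intro x hx
    have hsub : Set.uIcc a x ⊆ Set.Icc a b := by
      rw [Set.uIcc_of_le hx.1.le]
      exact Set.Icc_subset_Icc_right hx.2.le
    exact intervalIntegral.integral_hasDerivAt_right
      ((hEcont.mono hsub).intervalIntegrable)
      ((hEIoo.stronglyMeasurableAtFilter isOpen_Ioo) x hx)
      (hEcont.continuousAt (Icc_mem_nhds hx.1 hx.2))
  set Dψ : ℝ → ℂ := derivWithin ψ (Set.Icc a b) with hDψ
  have hDψcont : ContinuousOn Dψ (Set.Icc a b) :=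
    hψ.continuousOn_derivWithin (uniqueDiffOn_Icc hab) le_rfl
  have hψeq : ∀ x ∈ Set.Ioo a b, deriv ψ x = Dψ x := fun x hx =>
    (derivWithin_of_mem_nhds (Icc_mem_nhds hx.1 hx.2)).symm
  have hψder : ∀ x ∈ Set.Ioo a b, HasDerivAt ψ (deriv ψ x) x := fun x hx =>
    ((hψ.differentiableOn one_ne_zero x (Set.Ioo_subset_Icc_self hx)).differentiableAt
      (Icc_mem_nhds hx.1 hx.2)).hasDerivAt
  have haeIoo : ∀ᵐ x ∂(volume.restrict (Set.Ioc a b)), x ∈ Set.Ioo a b := by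
    rw [ae_iff]
    rw [Measure.restrict_apply (by exact (measurableSet_Ioo (a := a) (b := b)).compl)]
    refine measure_mono_null (fun x hx => ?_) (measure_singleton b)
    have h1 : x ∈ Set.Ioc a b := hx.2
    have h2 : ¬ (x ∈ Set.Ioo a b) := hx.1
    simp only [Set.mem_Ioo, Set.mem_Ioc, not_and, not_lt] at h1 h2 ⊢
    exact le_antisymm h1.2 (h2 h1.1)
  have hψ'int : IntervalIntegrable (deriv ψ) volume a b := by
    rw [intervalIntegrable_iff_integrableOn_Ioc_of_le hab.le]
    have hDint : IntegrableOn Dψ (Set.Ioc a b) volume :=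
      (hDψcont.integrableOn_compact isCompact_Icc).mono_set Set.Ioc_subset_Icc_self
    exact hDint.congr (haeIoo.mono fun x hx => (hψeq x hx).symm)
  have hIBP := intervalIntegral.integral_mul_deriv_eq_deriv_mul_of_hasDerivAt
    (u := F) (v := ψ) (u' := E) (v' := deriv ψ)
    (by rw [huIcc]; exact hFcont) (by rw [huIcc]; exact hψ.continuousOn)
    (by
      intro x hx
      rw [min_eq_left hab.le, max_eq_right hab.le] at hx
      exact hFder x hx)
    (by
      intro x hx
      rw [min_eq_left hab.le, max_eq_right hab.le] at hx
      exact hψder x hx)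
    hEint hψ'int
  have hFa : F a = 0 := intervalIntegral.integral_same
  have hmain : ∫ x in a..b, E x * ψ x = F b * ψ b - ∫ x in a..b, F x * deriv ψ x := by
    rw [hFa, zero_mul, sub_zero] at hIBP
    linear_combination hIBP
  have hint1 : IntervalIntegrable (fun x => ‖F x * deriv ψ x‖) volume a b := by
    rw [intervalIntegrable_iff_integrableOn_Ioc_of_le hab.le]
    have hcont : ContinuousOn (fun x => ‖F x * Dψ x‖) (Set.Icc a b) :=
      (hFcont.mul hDψcont).norm
    refine ((hcont.integrableOn_compact isCompact_Icc).mono_set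
      Set.Ioc_subset_Icc_self).congr (haeIoo.mono fun x hx => ?_)
    show ‖F x * Dψ x‖ = ‖F x * deriv ψ x‖
    rw [hψeq x hx]
  have hint2 : IntervalIntegrable (fun x => 2 * lam⁻¹ * ‖deriv ψ x‖) volume a b :=
    (hψ'int.norm).const_mul _
  have hpoint : ∀ x ∈ Set.Icc a b, ‖F x * deriv ψ x‖ ≤ 2 * lam⁻¹ * ‖deriv ψ x‖ := by
    intro x hx
    rw [norm_mul]
    exact mul_le_mul_of_nonneg_right (hFkey x hx) (norm_nonneg _)
  calc ‖∫ x in a..b, E x * ψ x‖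
      = ‖F b * ψ b - ∫ x in a..b, F x * deriv ψ x‖ := by rw [hmain]
    _ ≤ ‖F b * ψ b‖ + ‖∫ x in a..b, F x * deriv ψ x‖ := norm_sub_le _ _
    _ ≤ 2 * lam⁻¹ * ‖ψ b‖ + ∫ x in a..b, ‖F x * deriv ψ x‖ := by
        refine add_le_add ?_ (intervalIntegral.norm_integral_le_integral_norm hab.le)
        rw [norm_mul]
        exact mul_le_mul_of_nonneg_right (hFkey b ⟨hab.le, le_rfl⟩) (norm_nonneg _)
    _ ≤ 2 * lam⁻¹ * ‖ψ b‖ + ∫ x in a..b, 2 * lam⁻¹ * ‖deriv ψ x‖ := by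
        exact add_le_add_right (intervalIntegral.integral_mono_on hab.le hint1 hint2 hpoint) _
    _ = 2 * lam⁻¹ * (‖ψ b‖ + ∫ x in a..b, ‖deriv ψ x‖) := by
        rw [intervalIntegral.integral_const_mul]
        ring
end

section
/- (Van der Corput, second-derivative case) Suppose φ : [a,b] → ℝ is C² with |φ''(x)| ≥ 1 for all x ∈ (a,b), and ψ : [a,b] → ℂ is C¹. Then |∫_a^b e^{iλφ(x)} ψ(x) dx| ≤ c·λ^{-1/2}·( |ψ(b)| + ∫_a^b |ψ'(x)| dx ) for all λ > 0, with an absolute constant c. -/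
open Set MeasureTheory intervalIntegral Topology Filter

lemma norm_exp_I_mul (lam t : ℝ) : ‖Complex.exp (Complex.I * lam * t)‖ = 1 := by
  rw [Complex.norm_exp]
  norm_num [Complex.mul_re]

lemma vdc1 {a b δ lam : ℝ} (hab : a ≤ b) (hδ : 0 < δ) (hlam : 0 < lam)
    {φ φ' φ'' : ℝ → ℝ}
    (hφ : ∀ x ∈ Icc a b, HasDerivAt φ (φ' x) x)
    (hφ' : ∀ x ∈ Icc a b, HasDerivAt φ' (φ'' x) x)
    (hφ''c : ContinuousOn φ'' (Icc a b))
    (hconv : ∀ x ∈ Icc a b, 0 ≤ φ'' x)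
    (hsign : (∀ x ∈ Icc a b, δ ≤ φ' x) ∨ (∀ x ∈ Icc a b, φ' x ≤ -δ)) :
    ‖∫ x in a..b, Complex.exp (Complex.I * lam * φ x)‖ ≤ 3 / (lam * δ) := by
  have huIcc : uIcc a b = Icc a b := uIcc_of_le hab
  have habs : ∀ x ∈ Icc a b, δ ≤ |φ' x| := by
    intro x hx
    rcases hsign with h | h
    · exact le_trans (h x hx) (le_abs_self _)
    · exact le_trans (by linarith [h x hx]) (neg_le_abs _)
  have hne : ∀ x ∈ Icc a b, φ' x ≠ 0 := by
    intro x hx h0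
    have := habs x hx; rw [h0] at this; simp at this; linarith
  have hφ'c : ContinuousOn φ' (Icc a b) := fun x hx =>
    (hφ' x hx).continuousAt.continuousWithinAt
  have hφc : ContinuousOn φ (Icc a b) := fun x hx =>
    (hφ x hx).continuousAt.continuousWithinAt
  have hIlam : (Complex.I * lam : ℂ) ≠ 0 := by
    simp [Complex.I_ne_zero, Complex.ofReal_ne_zero, ne_of_gt hlam]
  set u : ℝ → ℂ := fun x => ((φ' x : ℂ))⁻¹ with hu_def
  set u' : ℝ → ℂ := fun x => -(φ'' x : ℂ) / (φ' x : ℂ) ^ 2 with hu'_def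
  set v : ℝ → ℂ := fun x => Complex.exp (Complex.I * lam * φ x) * (Complex.I * lam)⁻¹ with hv_def
  set v' : ℝ → ℂ := fun x => Complex.exp (Complex.I * lam * φ x) * (φ' x : ℂ) with hv'_def
  have hcne : ∀ x ∈ Icc a b, ((φ' x : ℂ)) ≠ 0 := fun x hx => by
    exact_mod_cast hne x hx
  have hu : ∀ x ∈ uIcc a b, HasDerivAt u (u' x) x := by
    rw [huIcc]; intro x hx
    have h0 : HasDerivAt (fun y : ℝ => ((φ' y : ℂ))) ((φ'' x : ℂ)) x := (hφ' x hx).ofReal_comp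
    have h1 := (hasDerivAt_inv (hcne x hx)).scomp x h0
    refine h1.congr_deriv ?_
    simp only [hu'_def, smul_eq_mul]
    ring
  have hv : ∀ x ∈ uIcc a b, HasDerivAt v (v' x) x := by
    rw [huIcc]; intro x hx
    have h1 : HasDerivAt (fun y => Complex.I * lam * (φ y : ℂ)) (Complex.I * lam * (φ' x : ℂ)) x :=
      ((hφ x hx).ofReal_comp).const_mul (Complex.I * lam)
    have h2 := (h1.cexp).mul_const (Complex.I * lam)⁻¹
    refine h2.congr_deriv ?_
    simp only [hv'_def]
    field_simp [Complex.ofReal_ne_zero.2 hlam.ne']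
  have hexpc : ContinuousOn (fun x => Complex.exp (Complex.I * lam * φ x)) (Icc a b) :=
    Complex.continuous_exp.comp_continuousOn
      ((continuous_const.mul Complex.continuous_ofReal).comp_continuousOn hφc)
  have hu'c : ContinuousOn u' (Icc a b) := by
    apply ContinuousOn.div
    · exact (Complex.continuous_ofReal.comp_continuousOn hφ''c).neg
    · exact (Complex.continuous_ofReal.comp_continuousOn hφ'c).pow 2
    · intro x hx; exact pow_ne_zero 2 (hcne x hx)
  have hv'c : ContinuousOn v' (Icc a b) :=
    hexpc.mul (Complex.continuous_ofReal.comp_continuousOn hφ'c)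
  have hu'int : IntervalIntegrable u' volume a b := (hu'c.mono (by rw [huIcc])).intervalIntegrable
  have hv'int : IntervalIntegrable v' volume a b := (hv'c.mono (by rw [huIcc])).intervalIntegrable
  have parts := integral_mul_deriv_eq_deriv_mul hu hv hu'int hv'int
  have hLHS : (∫ x in a..b, u x * v' x) = ∫ x in a..b, Complex.exp (Complex.I * lam * φ x) := by
    apply integral_congr
    intro x hx
    rw [huIcc] at hx
    simp only [hu_def, hv'_def]
    field_simp [hcne x hx]
    -- compute the integral J of φ''/φ'^2
  have hanti : ∀ x ∈ uIcc a b, HasDerivAt (fun y => -(φ' y)⁻¹) (φ'' x / (φ' x) ^ 2) x := by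
    rw [huIcc]; intro x hx
    have := ((hφ' x hx).inv (hne x hx)).neg
    exact this.congr_deriv (by ring)
  have hJint : IntervalIntegrable (fun x => φ'' x / (φ' x) ^ 2) volume a b := by
    apply ContinuousOn.intervalIntegrable
    rw [huIcc]
    exact hφ''c.div (hφ'c.pow 2) (fun x hx => pow_ne_zero 2 (hne x hx))
  have hJ : (∫ x in a..b, φ'' x / (φ' x) ^ 2) = (φ' a)⁻¹ - (φ' b)⁻¹ := by
    rw [integral_eq_sub_of_hasDerivAt hanti hJint]
    ring
  have hJle : (∫ x in a..b, φ'' x / (φ' x) ^ 2) ≤ δ⁻¹ := by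
    rw [hJ]
    rcases hsign with h | h
    · have h1 : (φ' a)⁻¹ ≤ δ⁻¹ := inv_anti₀ hδ (h a (left_mem_Icc.2 hab))
      have h2 : 0 < (φ' b)⁻¹ :=
        inv_pos.2 (lt_of_lt_of_le hδ (h b (right_mem_Icc.2 hab)))
      linarith
    · have hb0 : φ' b ≤ -δ := h b (right_mem_Icc.2 hab)
      have ha0 : φ' a ≤ -δ := h a (left_mem_Icc.2 hab)
      have h1 : (φ' a)⁻¹ < 0 := inv_lt_zero.2 (by linarith)
      have h2 : -δ⁻¹ ≤ (φ' b)⁻¹ := by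
        have h3 : (-(φ' b))⁻¹ ≤ δ⁻¹ := inv_anti₀ hδ (by linarith)
        rw [inv_neg] at h3; linarith
      linarith
  rw [← hLHS, parts]
  have hnv : ∀ x : ℝ, ‖v x‖ = lam⁻¹ := by
    intro x
    rw [hv_def]
    simp only
    rw [norm_mul, norm_exp_I_mul, norm_inv, norm_mul, Complex.norm_I, Complex.norm_real,
      Real.norm_eq_abs, abs_of_pos hlam, one_mul, one_mul]
  have hnu : ∀ x ∈ Icc a b, ‖u x‖ ≤ δ⁻¹ := by
    intro x hx
    rw [hu_def]
    simp only
    rw [norm_inv, Complex.norm_real, Real.norm_eq_abs]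
    exact inv_anti₀ hδ (habs x hx)
  have h1 : ‖u b * v b‖ ≤ δ⁻¹ * lam⁻¹ := by
    rw [norm_mul, hnv b]
    exact mul_le_mul_of_nonneg_right (hnu b (right_mem_Icc.2 hab)) (by positivity)
  have h2 : ‖u a * v a‖ ≤ δ⁻¹ * lam⁻¹ := by
    rw [norm_mul, hnv a]
    exact mul_le_mul_of_nonneg_right (hnu a (left_mem_Icc.2 hab)) (by positivity)
  have h3 : ‖∫ x in a..b, u' x * v x‖ ≤ δ⁻¹ * lam⁻¹ := by
    calc ‖∫ x in a..b, u' x * v x‖ ≤ ∫ x in a..b, ‖u' x * v x‖ :=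
          norm_integral_le_integral_norm hab
      _ = ∫ x in a..b, φ'' x / (φ' x) ^ 2 * lam⁻¹ := by
          apply integral_congr
          intro x hx
          rw [huIcc] at hx
          show ‖u' x * v x‖ = _
          rw [norm_mul, hnv x]
          congr 1
          rw [hu'_def]
          simp only
          rw [norm_div, norm_neg, Complex.norm_real, norm_pow, Complex.norm_real,
            Real.norm_eq_abs, Real.norm_eq_abs, abs_of_nonneg (hconv x hx), sq_abs]
      _ = (∫ x in a..b, φ'' x / (φ' x) ^ 2) * lam⁻¹ := integral_mul_const _ _
      _ ≤ δ⁻¹ * lam⁻¹ := mul_le_mul_of_nonneg_right hJle (by positivity)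
  calc ‖u b * v b - u a * v a - ∫ x in a..b, u' x * v x‖
      ≤ ‖u b * v b‖ + ‖u a * v a‖ + ‖∫ x in a..b, u' x * v x‖ :=
        (norm_sub_le _ _).trans (add_le_add (norm_sub_le _ _) le_rfl)
    _ ≤ δ⁻¹ * lam⁻¹ + δ⁻¹ * lam⁻¹ + δ⁻¹ * lam⁻¹ := by linarith
    _ = 3 / (lam * δ) := by field_simp; ring

lemma vdc_grow {a b : ℝ} {φ' φ'' : ℝ → ℝ}
    (hφ' : ∀ x ∈ Icc a b, HasDerivAt φ' (φ'' x) x)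
    (hφ''c : ContinuousOn φ'' (Icc a b))
    (h1 : ∀ x ∈ Icc a b, 1 ≤ φ'' x) :
    ∀ x ∈ Icc a b, ∀ y ∈ Icc a b, x ≤ y → φ' x + (y - x) ≤ φ' y := by
  intro x hx y hy hxy
  have hsub : Icc x y ⊆ Icc a b := Icc_subset_Icc hx.1 hy.2
  have huIcc : uIcc x y = Icc x y := uIcc_of_le hxy
  have hsub' : uIcc x y ⊆ Icc a b := huIcc ▸ hsub
  have hint : IntervalIntegrable φ'' volume x y :=
    (hφ''c.mono hsub').intervalIntegrable
  have heq : ∫ t in x..y, φ'' t = φ' y - φ' x :=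
    integral_eq_sub_of_hasDerivAt (fun t ht => hφ' t (hsub' ht)) hint
  have hmono : (y - x) * 1 ≤ ∫ t in x..y, φ'' t := by
    have h2 := integral_mono_on hxy intervalIntegrable_const hint
      (fun t ht => h1 t (hsub ht))
    simpa using h2
  linarith

lemma vdc2a {a b lam : ℝ} (hab : a ≤ b) (hlam : 0 < lam)
    {φ φ' φ'' : ℝ → ℝ}
    (hφ : ∀ x ∈ Icc a b, HasDerivAt φ (φ' x) x)
    (hφ' : ∀ x ∈ Icc a b, HasDerivAt φ' (φ'' x) x)
    (hφ''c : ContinuousOn φ'' (Icc a b))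
    (h1 : ∀ x ∈ Icc a b, 1 ≤ φ'' x)
    (h0 : 0 ≤ φ' a) :
    ‖∫ x in a..b, Complex.exp (Complex.I * lam * φ x)‖ ≤ 4 * lam ^ (-(1:ℝ)/2) := by
  set δ : ℝ := lam ^ (-(1:ℝ)/2) with hδ_def
  have hδ : 0 < δ := Real.rpow_pos_of_pos hlam _
  have hld : lam * δ * δ = 1 := by
    rw [hδ_def]
    nth_rewrite 1 [← Real.rpow_one lam]
    rw [← Real.rpow_add hlam, ← Real.rpow_add hlam]
    norm_num
  have hlδpos : 0 < lam * δ := by positivity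
  have h3δ : 3 / (lam * δ) = 3 * δ := by
    rw [div_eq_iff hlδpos.ne']
    nlinarith
  have hφc : ContinuousOn φ (Icc a b) := fun x hx =>
    (hφ x hx).continuousAt.continuousWithinAt
  have hexpc : ContinuousOn (fun x => Complex.exp (Complex.I * lam * φ x)) (Icc a b) :=
    Complex.continuous_exp.comp_continuousOn
      ((continuous_const.mul Complex.continuous_ofReal).comp_continuousOn hφc)
  set m := min b (a + δ) with hm_def
  have ham : a ≤ m := le_min hab (by linarith)
  have hmb : m ≤ b := min_le_left _ _
  have hm1 : m - a ≤ δ := by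
    have := min_le_right b (a + δ); linarith
  have hint1 : IntervalIntegrable (fun x => Complex.exp (Complex.I * lam * φ x)) volume a m :=
    (hexpc.mono (by rw [uIcc_of_le ham]; exact Icc_subset_Icc le_rfl hmb)).intervalIntegrable
  have hint2 : IntervalIntegrable (fun x => Complex.exp (Complex.I * lam * φ x)) volume m b :=
    (hexpc.mono (by rw [uIcc_of_le hmb]; exact Icc_subset_Icc ham le_rfl)).intervalIntegrable
  have hsplit : (∫ x in a..b, Complex.exp (Complex.I * lam * φ x)) =
      (∫ x in a..m, Complex.exp (Complex.I * lam * φ x)) +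
      (∫ x in m..b, Complex.exp (Complex.I * lam * φ x)) :=
    (integral_add_adjacent_intervals hint1 hint2).symm
  have hbd1 : ‖∫ x in a..m, Complex.exp (Complex.I * lam * φ x)‖ ≤ δ := by
    have := norm_integral_le_of_norm_le_const
      (C := 1) (f := fun x => Complex.exp (Complex.I * lam * φ x)) (a := a) (b := m)
      (fun x _ => le_of_eq (norm_exp_I_mul lam (φ x)))
    rw [one_mul] at this
    calc ‖∫ x in a..m, Complex.exp (Complex.I * lam * φ x)‖ ≤ |m - a| := this
      _ = m - a := abs_of_nonneg (by linarith)
      _ ≤ δ := hm1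
  have hbd2 : ‖∫ x in m..b, Complex.exp (Complex.I * lam * φ x)‖ ≤ 3 * δ := by
    rcases le_or_gt b (a + δ) with hb | hb
    · have : m = b := min_eq_left hb
      rw [this, integral_same, norm_zero]
      positivity
    · have hmeq : m = a + δ := min_eq_right hb.le
      have hsub : Icc m b ⊆ Icc a b := Icc_subset_Icc ham le_rfl
      have key : ∀ x ∈ Icc m b, δ ≤ φ' x := by
        intro x hx
        have hxa : a ≤ x := ham.trans hx.1
        have := vdc_grow hφ' hφ''c h1 a (left_mem_Icc.2 hab) x (hsub hx) hxa
        have : φ' a + (x - a) ≤ φ' x := this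
        have hxm : m ≤ x := hx.1
        rw [hmeq] at hxm
        linarith
      rw [← h3δ]
      exact vdc1 hmb hδ hlam (fun x hx => hφ x (hsub hx)) (fun x hx => hφ' x (hsub hx))
        (hφ''c.mono hsub) (fun x hx => le_trans zero_le_one (h1 x (hsub hx)))
        (Or.inl key)
  calc ‖∫ x in a..b, Complex.exp (Complex.I * lam * φ x)‖
      ≤ ‖∫ x in a..m, Complex.exp (Complex.I * lam * φ x)‖ +
        ‖∫ x in m..b, Complex.exp (Complex.I * lam * φ x)‖ := by
        rw [hsplit]; exact norm_add_le _ _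
    _ ≤ δ + 3 * δ := add_le_add hbd1 hbd2
    _ = 4 * δ := by ring

lemma vdc2b {a b lam : ℝ} (hab : a ≤ b) (hlam : 0 < lam)
    {φ φ' φ'' : ℝ → ℝ}
    (hφ : ∀ x ∈ Icc a b, HasDerivAt φ (φ' x) x)
    (hφ' : ∀ x ∈ Icc a b, HasDerivAt φ' (φ'' x) x)
    (hφ''c : ContinuousOn φ'' (Icc a b))
    (h1 : ∀ x ∈ Icc a b, 1 ≤ φ'' x)
    (h0 : φ' b ≤ 0) :
    ‖∫ x in a..b, Complex.exp (Complex.I * lam * φ x)‖ ≤ 4 * lam ^ (-(1:ℝ)/2) := by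
  set δ : ℝ := lam ^ (-(1:ℝ)/2) with hδ_def
  have hδ : 0 < δ := Real.rpow_pos_of_pos hlam _
  have hld : lam * δ * δ = 1 := by
    rw [hδ_def]
    nth_rewrite 1 [← Real.rpow_one lam]
    rw [← Real.rpow_add hlam, ← Real.rpow_add hlam]
    norm_num
  have hlδpos : 0 < lam * δ := by positivity
  have h3δ : 3 / (lam * δ) = 3 * δ := by
    rw [div_eq_iff hlδpos.ne']
    nlinarith
  have hφc : ContinuousOn φ (Icc a b) := fun x hx =>
    (hφ x hx).continuousAt.continuousWithinAt
  have hexpc : ContinuousOn (fun x => Complex.exp (Complex.I * lam * φ x)) (Icc a b) :=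
    Complex.continuous_exp.comp_continuousOn
      ((continuous_const.mul Complex.continuous_ofReal).comp_continuousOn hφc)
  set m := max a (b - δ) with hm_def
  have ham : a ≤ m := le_max_left _ _
  have hmb : m ≤ b := max_le hab (by linarith)
  have hm1 : b - m ≤ δ := by
    have := le_max_right a (b - δ); linarith
  have hint1 : IntervalIntegrable (fun x => Complex.exp (Complex.I * lam * φ x)) volume a m :=
    (hexpc.mono (by rw [uIcc_of_le ham]; exact Icc_subset_Icc le_rfl hmb)).intervalIntegrable
  have hint2 : IntervalIntegrable (fun x => Complex.exp (Complex.I * lam * φ x)) volume m b :=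
    (hexpc.mono (by rw [uIcc_of_le hmb]; exact Icc_subset_Icc ham le_rfl)).intervalIntegrable
  have hsplit : (∫ x in a..b, Complex.exp (Complex.I * lam * φ x)) =
      (∫ x in a..m, Complex.exp (Complex.I * lam * φ x)) +
      (∫ x in m..b, Complex.exp (Complex.I * lam * φ x)) :=
    (integral_add_adjacent_intervals hint1 hint2).symm
  have hbd2 : ‖∫ x in m..b, Complex.exp (Complex.I * lam * φ x)‖ ≤ δ := by
    have := norm_integral_le_of_norm_le_const
      (C := 1) (f := fun x => Complex.exp (Complex.I * lam * φ x)) (a := m) (b := b)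
      (fun x _ => le_of_eq (norm_exp_I_mul lam (φ x)))
    rw [one_mul] at this
    calc ‖∫ x in m..b, Complex.exp (Complex.I * lam * φ x)‖ ≤ |b - m| := this
      _ = b - m := abs_of_nonneg (by linarith)
      _ ≤ δ := hm1
  have hbd1 : ‖∫ x in a..m, Complex.exp (Complex.I * lam * φ x)‖ ≤ 3 * δ := by
    rcases le_or_gt (b - δ) a with hb | hb
    · have : m = a := max_eq_left hb
      rw [this, integral_same, norm_zero]
      positivity
    · have hmeq : m = b - δ := max_eq_right hb.le
      have hsub : Icc a m ⊆ Icc a b := Icc_subset_Icc le_rfl hmb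
      have key : ∀ x ∈ Icc a m, φ' x ≤ -δ := by
        intro x hx
        have hxb : x ≤ b := hx.2.trans hmb
        have hg := vdc_grow hφ' hφ''c h1 x (hsub hx) b (right_mem_Icc.2 hab) hxb
        have hxm : x ≤ m := hx.2
        rw [hmeq] at hxm
        linarith
      rw [← h3δ]
      exact vdc1 ham hδ hlam (fun x hx => hφ x (hsub hx)) (fun x hx => hφ' x (hsub hx))
        (hφ''c.mono hsub) (fun x hx => le_trans zero_le_one (h1 x (hsub hx)))
        (Or.inr key)
  calc ‖∫ x in a..b, Complex.exp (Complex.I * lam * φ x)‖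
      ≤ ‖∫ x in a..m, Complex.exp (Complex.I * lam * φ x)‖ +
        ‖∫ x in m..b, Complex.exp (Complex.I * lam * φ x)‖ := by
        rw [hsplit]; exact norm_add_le _ _
    _ ≤ 3 * δ + δ := add_le_add hbd1 hbd2
    _ = 4 * δ := by ring

lemma vdc2 {a b lam : ℝ} (hab : a ≤ b) (hlam : 0 < lam)
    {φ φ' φ'' : ℝ → ℝ}
    (hφ : ∀ x ∈ Icc a b, HasDerivAt φ (φ' x) x)
    (hφ' : ∀ x ∈ Icc a b, HasDerivAt φ' (φ'' x) x)
    (hφ''c : ContinuousOn φ'' (Icc a b))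
    (h1 : ∀ x ∈ Icc a b, 1 ≤ φ'' x) :
    ‖∫ x in a..b, Complex.exp (Complex.I * lam * φ x)‖ ≤ 8 * lam ^ (-(1:ℝ)/2) := by
  have hδ : 0 < lam ^ (-(1:ℝ)/2) := Real.rpow_pos_of_pos hlam _
  rcases le_or_gt 0 (φ' a) with h0a | h0a
  · have := vdc2a hab hlam hφ hφ' hφ''c h1 h0a
    linarith
  rcases le_or_gt (φ' b) 0 with h0b | h0b
  · have := vdc2b hab hlam hφ hφ' hφ''c h1 h0b
    linarith
  -- φ' a < 0 < φ' b : find a zero of φ'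
  have hφ'c : ContinuousOn φ' (Icc a b) := fun x hx =>
    (hφ' x hx).continuousAt.continuousWithinAt
  have hIVT := intermediate_value_Icc hab hφ'c
  have h0mem : (0:ℝ) ∈ Icc (φ' a) (φ' b) := ⟨h0a.le, h0b.le⟩
  obtain ⟨c, hc, hc0⟩ := hIVT h0mem
  have hsub1 : Icc a c ⊆ Icc a b := Icc_subset_Icc le_rfl hc.2
  have hsub2 : Icc c b ⊆ Icc a b := Icc_subset_Icc hc.1 le_rfl
  have hbd1 := vdc2b hc.1 hlam (fun x hx => hφ x (hsub1 hx)) (fun x hx => hφ' x (hsub1 hx))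
    (hφ''c.mono hsub1) (fun x hx => h1 x (hsub1 hx)) (le_of_eq hc0)
  have hbd2 := vdc2a hc.2 hlam (fun x hx => hφ x (hsub2 hx)) (fun x hx => hφ' x (hsub2 hx))
    (hφ''c.mono hsub2) (fun x hx => h1 x (hsub2 hx)) (ge_of_eq hc0)
  have hφc : ContinuousOn φ (Icc a b) := fun x hx =>
    (hφ x hx).continuousAt.continuousWithinAt
  have hexpc : ContinuousOn (fun x => Complex.exp (Complex.I * lam * φ x)) (Icc a b) :=
    Complex.continuous_exp.comp_continuousOn
      ((continuous_const.mul Complex.continuous_ofReal).comp_continuousOn hφc)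
  have hint1 : IntervalIntegrable (fun x => Complex.exp (Complex.I * lam * φ x)) volume a c :=
    (hexpc.mono (by rw [uIcc_of_le hc.1]; exact hsub1)).intervalIntegrable
  have hint2 : IntervalIntegrable (fun x => Complex.exp (Complex.I * lam * φ x)) volume c b :=
    (hexpc.mono (by rw [uIcc_of_le hc.2]; exact hsub2)).intervalIntegrable
  have hsplit : (∫ x in a..b, Complex.exp (Complex.I * lam * φ x)) =
      (∫ x in a..c, Complex.exp (Complex.I * lam * φ x)) +
      (∫ x in c..b, Complex.exp (Complex.I * lam * φ x)) :=
    (integral_add_adjacent_intervals hint1 hint2).symm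
  calc ‖∫ x in a..b, Complex.exp (Complex.I * lam * φ x)‖
      ≤ ‖∫ x in a..c, Complex.exp (Complex.I * lam * φ x)‖ +
        ‖∫ x in c..b, Complex.exp (Complex.I * lam * φ x)‖ := by
        rw [hsplit]; exact norm_add_le _ _
    _ ≤ 4 * lam ^ (-(1:ℝ)/2) + 4 * lam ^ (-(1:ℝ)/2) := add_le_add hbd1 hbd2
    _ = 8 * lam ^ (-(1:ℝ)/2) := by ring

lemma vdc3 {a b lam : ℝ} (hab : a ≤ b) (hlam : 0 < lam)
    {φ φ' φ'' : ℝ → ℝ} {ψ ψ' : ℝ → ℂ}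
    (hφ : ∀ x ∈ Icc a b, HasDerivAt φ (φ' x) x)
    (hφ' : ∀ x ∈ Icc a b, HasDerivAt φ' (φ'' x) x)
    (hφ''c : ContinuousOn φ'' (Icc a b))
    (h1 : ∀ x ∈ Icc a b, 1 ≤ φ'' x)
    (hψ : ∀ x ∈ Icc a b, HasDerivAt ψ (ψ' x) x)
    (hψ'c : ContinuousOn ψ' (Icc a b)) :
    ‖∫ x in a..b, Complex.exp (Complex.I * lam * φ x) * ψ x‖ ≤
      8 * lam ^ (-(1:ℝ)/2) * (‖ψ b‖ + ∫ x in a..b, ‖ψ' x‖) := by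
  set δ : ℝ := lam ^ (-(1:ℝ)/2) with hδ_def
  have hδ : 0 < δ := Real.rpow_pos_of_pos hlam _
  have huIcc : uIcc a b = Icc a b := uIcc_of_le hab
  set e : ℝ → ℂ := fun x => Complex.exp (Complex.I * lam * φ x) with he_def
  have hφc : ContinuousOn φ (Icc a b) := fun x hx =>
    (hφ x hx).continuousAt.continuousWithinAt
  have hexpc : ContinuousOn e (Icc a b) :=
    Complex.continuous_exp.comp_continuousOn
      ((continuous_const.mul Complex.continuous_ofReal).comp_continuousOn hφc)
  have hψc : ContinuousOn ψ (Icc a b) := fun x hx =>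
    (hψ x hx).continuousAt.continuousWithinAt
  set F : ℝ → ℂ := fun t => ∫ x in a..t, e x with hF_def
  have hFc : ContinuousOn F (Icc a b) := by
    have := continuousOn_primitive_interval (μ := volume) (f := e) (a := a) (b := b)
      (by rw [huIcc]; exact hexpc.integrableOn_Icc)
    rwa [huIcc] at this
  have heint : ∀ s t, s ∈ Icc a b → t ∈ Icc a b → IntervalIntegrable e volume s t := by
    intro s t hs ht
    apply (hexpc.mono _).intervalIntegrable
    rw [uIcc_eq_union]
    apply union_subset <;> apply Icc_subset_Icc <;>
      simp [hs.1, hs.2, ht.1, ht.2, le_refl]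
  have hFd : ∀ x ∈ Ioo a b, HasDerivAt F (e x) x := by
    intro x hx
    apply integral_hasDerivAt_right (heint a x (left_mem_Icc.2 hab) (mem_Icc_of_Ioo hx))
    · exact ⟨Ioo a b, Ioo_mem_nhds hx.1 hx.2,
        (hexpc.mono Ioo_subset_Icc_self).aestronglyMeasurable measurableSet_Ioo⟩
    · exact Complex.continuous_exp.continuousAt.comp
        (continuousAt_const.mul
          (Complex.continuous_ofReal.continuousAt.comp
            (hφ x (mem_Icc_of_Ioo hx)).continuousAt))
  have hFa : F a = 0 := integral_same
  have hFbd : ∀ t ∈ Icc a b, ‖F t‖ ≤ 8 * δ := by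
    intro t ht
    have hsub : Icc a t ⊆ Icc a b := Icc_subset_Icc le_rfl ht.2
    exact vdc2 ht.1 hlam (fun x hx => hφ x (hsub hx)) (fun x hx => hφ' x (hsub hx))
      (hφ''c.mono hsub) (fun x hx => h1 x (hsub hx))
  have hψ'int : IntervalIntegrable ψ' volume a b :=
    (hψ'c.mono (le_of_eq huIcc)).intervalIntegrable
  have heintab : IntervalIntegrable e volume a b :=
    heint a b (left_mem_Icc.2 hab) (right_mem_Icc.2 hab)
  have hψc' : ContinuousOn ψ (uIcc a b) := by rw [huIcc]; exact hψc
  have hFc' : ContinuousOn F (uIcc a b) := by rw [huIcc]; exact hFc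
  have parts := integral_mul_deriv_eq_deriv_mul_of_hasDeriv_right
    (u := ψ) (v := F) (u' := ψ') (v' := e) (a := a) (b := b)
    hψc' hFc' 
    (by rw [min_eq_left hab, max_eq_right hab]
        exact fun x hx => (hψ x (mem_Icc_of_Ioo hx)).hasDerivWithinAt)
    (by rw [min_eq_left hab, max_eq_right hab]
        exact fun x hx => (hFd x hx).hasDerivWithinAt)
    hψ'int heintab
  have hLHS : (∫ x in a..b, ψ x * e x) = ∫ x in a..b, e x * ψ x :=
    integral_congr (fun x _ => mul_comm _ _)
  rw [← hLHS, parts, hFa, mul_zero, sub_zero]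
  have hF'bd : ‖∫ x in a..b, ψ' x * F x‖ ≤ (∫ x in a..b, ‖ψ' x‖) * (8 * δ) := by
    calc ‖∫ x in a..b, ψ' x * F x‖ ≤ ∫ x in a..b, ‖ψ' x * F x‖ :=
          norm_integral_le_integral_norm hab
      _ ≤ ∫ x in a..b, ‖ψ' x‖ * (8 * δ) := by
          apply integral_mono_on hab
          · apply ContinuousOn.intervalIntegrable
            rw [huIcc]
            exact (hψ'c.mul hFc).norm
          · apply ContinuousOn.intervalIntegrable
            rw [huIcc]
            exact (hψ'c.norm.mul continuousOn_const)
          · intro x hx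
            rw [norm_mul]
            exact mul_le_mul_of_nonneg_left (hFbd x hx) (norm_nonneg _)
      _ = (∫ x in a..b, ‖ψ' x‖) * (8 * δ) := integral_mul_const _ _
  calc ‖ψ b * F b - ∫ x in a..b, ψ' x * F x‖
      ≤ ‖ψ b * F b‖ + ‖∫ x in a..b, ψ' x * F x‖ := norm_sub_le _ _
    _ ≤ ‖ψ b‖ * (8 * δ) + (∫ x in a..b, ‖ψ' x‖) * (8 * δ) := by
        apply add_le_add _ hF'bd
        rw [norm_mul]
        exact mul_le_mul_of_nonneg_left (hFbd b (right_mem_Icc.2 hab)) (norm_nonneg _)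
    _ = 8 * δ * (‖ψ b‖ + ∫ x in a..b, ‖ψ' x‖) := by ring

lemma intervalIntegral_conj {f : ℝ → ℂ} {a b : ℝ} :
    (∫ x in a..b, (starRingEnd ℂ) (f x)) = (starRingEnd ℂ) (∫ x in a..b, f x) := by
  rw [intervalIntegral, intervalIntegral, integral_conj, integral_conj, ← map_sub]

lemma vdc4 {a b lam : ℝ} (hab : a ≤ b) (hlam : 0 < lam)
    {φ φ' φ'' : ℝ → ℝ} {ψ ψ' : ℝ → ℂ}
    (hφ : ∀ x ∈ Icc a b, HasDerivAt φ (φ' x) x)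
    (hφ' : ∀ x ∈ Icc a b, HasDerivAt φ' (φ'' x) x)
    (hφ''c : ContinuousOn φ'' (Icc a b))
    (habs : ∀ x ∈ Icc a b, 1 ≤ |φ'' x|)
    (hψ : ∀ x ∈ Icc a b, HasDerivAt ψ (ψ' x) x)
    (hψ'c : ContinuousOn ψ' (Icc a b)) :
    ‖∫ x in a..b, Complex.exp (Complex.I * lam * φ x) * ψ x‖ ≤
      8 * lam ^ (-(1:ℝ)/2) * (‖ψ b‖ + ∫ x in a..b, ‖ψ' x‖) := by
  have hsign : ∀ x ∈ Icc a b, ∀ y ∈ Icc a b, 1 ≤ φ'' x → 1 ≤ -φ'' y → False := by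
    intro x hx y hy h1x h1y
    have hsub : uIcc x y ⊆ Icc a b := uIcc_subset_Icc hx hy
    have : (0:ℝ) ∈ uIcc (φ'' x) (φ'' y) := by
      rw [mem_uIcc]
      right; constructor <;> linarith
    obtain ⟨z, hz, hz0⟩ := intermediate_value_uIcc (hφ''c.mono hsub) this
    have := habs z (hsub hz)
    rw [hz0] at this
    norm_num at this
  rcases (le_abs.1 (habs a (left_mem_Icc.2 hab))) with hpos | hneg
  · have h1 : ∀ x ∈ Icc a b, 1 ≤ φ'' x := by
      intro x hx
      rcases (le_abs.1 (habs x hx)) with h | h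
      · exact h
      · exact absurd (hsign a (left_mem_Icc.2 hab) x hx hpos h) (fun h => h)
    exact vdc3 hab hlam hφ hφ' hφ''c h1 hψ hψ'c
  · have h1 : ∀ x ∈ Icc a b, 1 ≤ -φ'' x := by
      intro x hx
      rcases (le_abs.1 (habs x hx)) with h | h
      · exact absurd (hsign x hx a (left_mem_Icc.2 hab) h hneg) (fun h => h)
      · exact h
    have hpt : ∀ x : ℝ, Complex.exp (Complex.I * lam * (-φ x)) * (starRingEnd ℂ) (ψ x) =
        (starRingEnd ℂ) (Complex.exp (Complex.I * lam * φ x) * ψ x) := by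
      intro x
      rw [map_mul, ← Complex.exp_conj]
      congr 2
      simp [Complex.conj_I]
    have hnorm : ‖∫ x in a..b, Complex.exp (Complex.I * lam * φ x) * ψ x‖ =
        ‖∫ x in a..b, Complex.exp (Complex.I * lam * (-φ x)) * (starRingEnd ℂ) (ψ x)‖ := by
      rw [show (∫ x in a..b, Complex.exp (Complex.I * lam * (-φ x)) * (starRingEnd ℂ) (ψ x)) =
          (starRingEnd ℂ) (∫ x in a..b, Complex.exp (Complex.I * lam * φ x) * ψ x) by
        rw [← intervalIntegral_conj]; exact integral_congr fun x _ => (hpt x)]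
      rw [RCLike.norm_conj]
    rw [hnorm]
    have hres := vdc3 hab hlam (φ := fun y => -φ y) (φ' := fun y => -φ' y)
      (φ'' := fun y => -φ'' y) (ψ := fun y => (starRingEnd ℂ) (ψ y))
      (ψ' := fun y => (starRingEnd ℂ) (ψ' y))
      (fun x hx => (hφ x hx).neg) (fun x hx => (hφ' x hx).neg) hφ''c.neg h1
      (fun x hx => (hψ x hx).star) (continuous_star.comp_continuousOn hψ'c)
    have heqn : (∫ x in a..b, ‖(starRingEnd ℂ) (ψ' x)‖) = ∫ x in a..b, ‖ψ' x‖ :=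
      integral_congr fun x _ => RCLike.norm_conj _
    have hfin := hres
    simp only [Complex.ofReal_neg] at hfin
    rw [RCLike.norm_conj, heqn] at hfin
    exact hfin

theorem stmt_12 :
    ∃ c : ℝ, 0 < c ∧ ∀ (a b : ℝ), a < b → ∀ (φ : ℝ → ℝ) (ψ : ℝ → ℂ) (lam : ℝ),
      0 < lam →
      ContDiffOn ℝ 2 φ (Set.Icc a b) →
      (∀ x ∈ Set.Ioo a b, 1 ≤ |deriv (deriv φ) x|) →
      ContDiffOn ℝ 1 ψ (Set.Icc a b) →
      ‖∫ x in a..b, Complex.exp (Complex.I * lam * (φ x)) * ψ x‖ ≤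
        c * lam ^ (-(1 : ℝ) / 2) * (‖ψ b‖ + ∫ x in a..b, ‖deriv ψ x‖) := by
  refine ⟨8, by norm_num, ?_⟩
  intro a b hab φ ψ lam hlam hφ2 hφ'' hψ1
  have hab' : a ≤ b := hab.le
  set C : ℝ := 8 * lam ^ (-(1:ℝ)/2) with hC_def
  have hCpos : 0 < C := by
    have := Real.rpow_pos_of_pos hlam (-(1:ℝ)/2); positivity
  set f : ℝ → ℂ := fun x => Complex.exp (Complex.I * lam * φ x) * ψ x with hf_def
  have hφc : ContinuousOn φ (Icc a b) := hφ2.continuousOn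
  have hψc : ContinuousOn ψ (Icc a b) := hψ1.continuousOn
  have hfc : ContinuousOn f (Icc a b) :=
    (Complex.continuous_exp.comp_continuousOn
      ((continuous_const.mul Complex.continuous_ofReal).comp_continuousOn hφc)).mul hψc
  set Dψ : ℝ → ℂ := fun x => derivWithin ψ (Icc a b) x with hDψ_def
  have hDψc : ContinuousOn Dψ (Icc a b) :=
    hψ1.continuousOn_derivWithin (uniqueDiffOn_Icc hab) le_rfl
  have hφIoo : ContDiffOn ℝ 2 φ (Ioo a b) := hφ2.mono Ioo_subset_Icc_self
  have hψIoo : ContDiffOn ℝ 1 ψ (Ioo a b) := hψ1.mono Ioo_subset_Icc_self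
  have hdφ : ∀ x ∈ Ioo a b, HasDerivAt φ (deriv φ x) x := by
    intro x hx
    exact ((hφIoo.differentiableOn (by norm_num)).differentiableAt
      (isOpen_Ioo.mem_nhds hx)).hasDerivAt
  have hφ'Ioo : ContDiffOn ℝ 1 (deriv φ) (Ioo a b) :=
    hφIoo.deriv_of_isOpen isOpen_Ioo (by norm_num)
  have hdφ' : ∀ x ∈ Ioo a b, HasDerivAt (deriv φ) (deriv (deriv φ) x) x := by
    intro x hx
    exact ((hφ'Ioo.differentiableOn one_ne_zero).differentiableAt
      (isOpen_Ioo.mem_nhds hx)).hasDerivAt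
  have hφ''cIoo : ContinuousOn (deriv (deriv φ)) (Ioo a b) :=
    hφ'Ioo.continuousOn_deriv_of_isOpen isOpen_Ioo le_rfl
  have hdψ : ∀ x ∈ Ioo a b, HasDerivAt ψ (deriv ψ x) x := by
    intro x hx
    exact ((hψIoo.differentiableOn one_ne_zero).differentiableAt
      (isOpen_Ioo.mem_nhds hx)).hasDerivAt
  have hDψeq : ∀ x ∈ Ioo a b, deriv ψ x = Dψ x := by
    intro x hx
    exact (((hψIoo.differentiableOn one_ne_zero).differentiableAt
      (isOpen_Ioo.mem_nhds hx)).derivWithin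
      (uniqueDiffOn_Icc hab x (Ioo_subset_Icc_self hx))).symm
  have keyst : ∀ s t : ℝ, s ∈ Ioo a b → t ∈ Ioo a b → s ≤ t →
      ‖∫ x in s..t, f x‖ ≤ C * (‖ψ t‖ + ∫ x in s..t, ‖Dψ x‖) := by
    intro s t hs ht hst
    have hsub : Icc s t ⊆ Ioo a b := Icc_subset_Ioo hs.1 ht.2
    exact vdc4 hst hlam
      (fun x hx => hdφ x (hsub hx))
      (fun x hx => hdφ' x (hsub hx))
      (hφ''cIoo.mono hsub)
      (fun x hx => hφ'' x (hsub hx))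
      (fun x hx => by rw [← hDψeq x (hsub hx)]; exact hdψ x (hsub hx))
      (hDψc.mono (hsub.trans Ioo_subset_Icc_self))
  have hfint : IntervalIntegrable f volume a b :=
    (hfc.mono (by rw [uIcc_of_le hab'])).intervalIntegrable
  have hDψnc : ContinuousOn (fun x => ‖Dψ x‖) (Icc a b) := hDψc.norm
  -- Step 1 : for s ∈ Ioo a b, extend to t = b
  have step1 : ∀ s ∈ Ioo a b, ‖∫ x in s..b, f x‖ ≤ C * (‖ψ b‖ + ∫ x in s..b, ‖Dψ x‖) := by
    intro s hs
    have hsb : s < b := hs.2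
    have hIccsub : Icc s b ⊆ Icc a b := Icc_subset_Icc hs.1.le le_rfl
    have hl : (𝓝[Ioo s b] b).NeBot := by
      apply mem_closure_iff_nhdsWithin_neBot.mp
      rw [closure_Ioo hsb.ne]
      exact right_mem_Icc.2 hsb.le
    have hGc : ContinuousOn (fun t => ∫ x in s..t, f x) (Icc s b) := by
      have := continuousOn_primitive_interval (μ := volume) (f := f) (a := s) (b := b)
        (by rw [uIcc_of_le hsb.le]; exact (hfc.mono hIccsub).integrableOn_Icc)
      rwa [uIcc_of_le hsb.le] at this
    have hHc : ContinuousOn (fun t => ∫ x in s..t, ‖Dψ x‖) (Icc s b) := by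
      have := continuousOn_primitive_interval (μ := volume) (f := fun x => ‖Dψ x‖)
        (a := s) (b := b)
        (by rw [uIcc_of_le hsb.le]; exact ((hDψnc.mono hIccsub)).integrableOn_Icc)
      rwa [uIcc_of_le hsb.le] at this
    have hmem : b ∈ Icc s b := right_mem_Icc.2 hsb.le
    have tendsG : Filter.Tendsto (fun t => ‖∫ x in s..t, f x‖) (𝓝[Ioo s b] b)
        (𝓝 ‖∫ x in s..b, f x‖) :=
      (continuous_norm.continuousAt.tendsto.comp
        ((hGc.continuousWithinAt hmem).mono Ioo_subset_Icc_self))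
    have tendsH : Filter.Tendsto (fun t => C * (‖ψ t‖ + ∫ x in s..t, ‖Dψ x‖)) (𝓝[Ioo s b] b)
        (𝓝 (C * (‖ψ b‖ + ∫ x in s..b, ‖Dψ x‖))) := by
      apply Filter.Tendsto.const_mul
      apply Filter.Tendsto.add
      · exact (continuous_norm.continuousAt.tendsto.comp
          (((hψc.mono hIccsub).continuousWithinAt hmem).mono Ioo_subset_Icc_self))
      · exact (hHc.continuousWithinAt hmem).mono Ioo_subset_Icc_self
    apply le_of_tendsto_of_tendsto tendsG tendsH
    filter_upwards [self_mem_nhdsWithin] with t ht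
    exact keyst s t hs ⟨hs.1.trans ht.1, ht.2⟩ ht.1.le
  -- Step 2 : extend to s = a
  have step2 : ‖∫ x in a..b, f x‖ ≤ C * (‖ψ b‖ + ∫ x in a..b, ‖Dψ x‖) := by
    have hl : (𝓝[Ioo a b] a).NeBot := by
      apply mem_closure_iff_nhdsWithin_neBot.mp
      rw [closure_Ioo hab.ne]
      exact left_mem_Icc.2 hab'
    have hGc : ContinuousOn (fun s => ∫ x in b..s, f x) (Icc a b) := by
      have := continuousOn_primitive_interval' (μ := volume) (f := f) (b₁ := a) (b₂ := b)
        (a := b) hfint (by rw [uIcc_of_le hab']; exact right_mem_Icc.2 hab')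
      rwa [uIcc_of_le hab'] at this
    have hDψint : IntervalIntegrable (fun x => ‖Dψ x‖) volume a b :=
      (hDψnc.mono (by rw [uIcc_of_le hab'])).intervalIntegrable
    have hHc : ContinuousOn (fun s => ∫ x in b..s, ‖Dψ x‖) (Icc a b) := by
      have := continuousOn_primitive_interval' (μ := volume) (f := fun x => ‖Dψ x‖)
        (b₁ := a) (b₂ := b) (a := b) hDψint
        (by rw [uIcc_of_le hab']; exact right_mem_Icc.2 hab')
      rwa [uIcc_of_le hab'] at this
    have hmem : a ∈ Icc a b := left_mem_Icc.2 hab'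
    have tendsG : Filter.Tendsto (fun s => ‖∫ x in s..b, f x‖) (𝓝[Ioo a b] a)
        (𝓝 ‖∫ x in a..b, f x‖) := by
      have h1 : Filter.Tendsto (fun s => ∫ x in b..s, f x) (𝓝[Ioo a b] a)
          (𝓝 (∫ x in b..a, f x)) :=
        (hGc.continuousWithinAt hmem).mono Ioo_subset_Icc_self
      have h2 := (continuous_norm.continuousAt.tendsto.comp h1.neg)
      simp only [← integral_symm] at h2
      exact h2
    have tendsH : Filter.Tendsto (fun s => C * (‖ψ b‖ + ∫ x in s..b, ‖Dψ x‖)) (𝓝[Ioo a b] a)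
        (𝓝 (C * (‖ψ b‖ + ∫ x in a..b, ‖Dψ x‖))) := by
      apply Filter.Tendsto.const_mul
      apply Filter.Tendsto.const_add
      have h1 : Filter.Tendsto (fun s => ∫ x in b..s, ‖Dψ x‖) (𝓝[Ioo a b] a)
          (𝓝 (∫ x in b..a, ‖Dψ x‖)) :=
        (hHc.continuousWithinAt hmem).mono Ioo_subset_Icc_self
      have h2 := h1.neg
      simp only [← integral_symm] at h2
      exact h2
    apply le_of_tendsto_of_tendsto tendsG tendsH
    filter_upwards [self_mem_nhdsWithin] with s hs
    exact step1 s hs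
  -- replace Dψ by deriv ψ in the integral
  have hae : (∫ x in a..b, ‖Dψ x‖) = ∫ x in a..b, ‖deriv ψ x‖ := by
    apply intervalIntegral.integral_congr_ae
    have hbne : ∀ᵐ (x : ℝ), x ≠ b := by
      filter_upwards [MeasureTheory.compl_mem_ae_iff.2 (measure_singleton b)] with x hx
      simpa using hx
    filter_upwards [hbne] with x hx hmem
    rw [uIoc_of_le hab'] at hmem
    have hxIoo : x ∈ Ioo a b := ⟨hmem.1, lt_of_le_of_ne hmem.2 hx⟩
    rw [hDψeq x hxIoo]
  rw [← hae]
  exact step2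
end

section
/- (Uniform Bessel decay implies L² bound) Suppose J : (0,∞) → ℝ satisfies |J(r)| ≤ C·r^{-1/3}·(1 + r^{-1/3}|r − ν|)^{-1/4} for all r > 0 and some ν ≥ 0. Then for every R > 1, ‖J‖_{L²(R ≤ r ≤ 2R)} ≤ C' with C' depending only on C (not on ν or R). -/
open MeasureTheory

lemma rpow_neg_half_of_neg {x : ℝ} (h : x < 0) : x ^ (-(1:ℝ)/2) = 0 := by
  rw [Real.rpow_def_of_neg h]
  have hc : Real.cos (-(1:ℝ)/2 * Real.pi) = 0 := by
    rw [show (-(1:ℝ)/2 * Real.pi) = -(Real.pi/2) by ring, Real.cos_neg, Real.cos_pi_div_two]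
  rw [hc, mul_zero]

lemma abs_rpow_neg_half (x : ℝ) :
    |x| ^ (-(1:ℝ)/2) = x ^ (-(1:ℝ)/2) + (-x) ^ (-(1:ℝ)/2) := by
  rcases lt_trichotomy x 0 with h | h | h
  · rw [abs_of_neg h, rpow_neg_half_of_neg h, zero_add]
  · subst h
    simp [Real.zero_rpow (show (-(1:ℝ)/2) ≠ 0 by norm_num)]
  · rw [abs_of_pos h, rpow_neg_half_of_neg (by linarith : -x < 0), add_zero]

lemma intervalIntegrable_abs_rpow_neg_half (a b : ℝ) :
    IntervalIntegrable (fun x : ℝ => |x| ^ (-(1:ℝ)/2)) volume a b := by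
  have h1 : IntervalIntegrable (fun x : ℝ => x ^ (-(1:ℝ)/2)) volume a b :=
    intervalIntegral.intervalIntegrable_rpow' (by norm_num)
  have h1' : IntervalIntegrable (fun x : ℝ => x ^ (-(1:ℝ)/2)) volume (-a) (-b) :=
    intervalIntegral.intervalIntegrable_rpow' (by norm_num)
  have h2 := (IntervalIntegrable.iff_comp_neg (by simp)).mp h1'
  rw [neg_neg, neg_neg] at h2
  simp only [abs_rpow_neg_half]
  exact h1.add h2

lemma integral_abs_rpow_neg_half {a : ℝ} (ha : 0 ≤ a) :
    ∫ x in (-a)..a, |x| ^ (-(1:ℝ)/2) = 4 * Real.sqrt a := by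
  have h1 : IntervalIntegrable (fun x : ℝ => x ^ (-(1:ℝ)/2)) volume (-a) a :=
    intervalIntegral.intervalIntegrable_rpow' (by norm_num)
  have h2 : IntervalIntegrable (fun x : ℝ => (-x) ^ (-(1:ℝ)/2)) volume (-a) a := by
    have h1' : IntervalIntegrable (fun x : ℝ => x ^ (-(1:ℝ)/2)) volume a (-a) :=
      intervalIntegral.intervalIntegrable_rpow' (by norm_num)
    have := (IntervalIntegrable.iff_comp_neg (by simp)).mp h1'
    rwa [neg_neg] at this
  have e1 : ∫ x in (-a)..a, x ^ (-(1:ℝ)/2) = 2 * Real.sqrt a := by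
    rw [integral_rpow (Or.inl (by norm_num))]
    rw [show (-(1:ℝ)/2 + 1) = 1/2 by norm_num, ← Real.sqrt_eq_rpow, ← Real.sqrt_eq_rpow]
    rw [Real.sqrt_eq_zero_of_nonpos (by linarith : -a ≤ 0)]
    ring
  have e2 : ∫ x in (-a)..a, (-x) ^ (-(1:ℝ)/2) = 2 * Real.sqrt a := by
    rw [intervalIntegral.integral_comp_neg (fun x : ℝ => x ^ (-(1:ℝ)/2))]
    rw [neg_neg]
    exact e1
  simp only [abs_rpow_neg_half]
  rw [intervalIntegral.integral_add h1 h2, e1, e2]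
  ring

lemma integrableOn_shift (ν a b : ℝ) :
    IntegrableOn (fun r : ℝ => |r - ν| ^ (-(1:ℝ)/2)) (Set.Icc a b) volume := by
  rcases le_or_gt a b with hab | hab
  · have h := (intervalIntegrable_abs_rpow_neg_half (a - ν) (b - ν)).comp_sub_right ν
    have ha : a - ν + ν = a := by ring
    have hb : b - ν + ν = b := by ring
    rw [ha, hb] at h
    exact (integrableOn_Icc_iff_integrableOn_Ioc).mpr h.1
  · rw [Set.Icc_eq_empty (not_le.mpr hab)]
    exact integrableOn_empty

theorem stmt_16 (C : ℝ) (hC : 0 < C) :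
    ∃ C' : ℝ, 0 < C' ∧ ∀ (ν : ℝ), 0 ≤ ν → ∀ J : ℝ → ℝ, Measurable J →
      (∀ r : ℝ, 0 < r →
        |J r| ≤ C * r ^ (-(1 : ℝ) / 3) *
          (1 + r ^ (-(1 : ℝ) / 3) * |r - ν|) ^ (-(1 : ℝ) / 4)) →
      ∀ R : ℝ, 1 < R → (∫ r in Set.Icc R (2 * R), (J r) ^ 2) ≤ C' ^ 2 := by
  refine ⟨3 * C, by positivity, ?_⟩
  intro ν hν J hJmeas hJ R hR
  have hR0 : (0:ℝ) < R := lt_trans one_pos hR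
  set s := Set.Icc R (2*R) with hs
  have hginta : IntegrableOn (fun r : ℝ => |r - ν| ^ (-(1:ℝ)/2)) s volume :=
    integrableOn_shift ν R (2*R)
  have hgint : IntegrableOn (fun r : ℝ => C^2 * R ^ (-(1:ℝ)/2) * |r - ν| ^ (-(1:ℝ)/2)) s volume :=
    hginta.const_mul _
  have hae : ∀ᵐ r ∂(volume.restrict s),
      (J r)^2 ≤ C^2 * R ^ (-(1:ℝ)/2) * |r - ν| ^ (-(1:ℝ)/2) := by
    have hne : ∀ᵐ (r:ℝ) ∂(volume.restrict s), r ≠ ν := by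
      refine ae_restrict_of_ae ?_
      rw [ae_iff]
      have hset : {r : ℝ | ¬ r ≠ ν} = {ν} := by ext r; simp
      rw [hset]
      exact Real.volume_singleton
    filter_upwards [hne, ae_restrict_mem measurableSet_Icc] with r hrne hrs
    obtain ⟨hr1, hr2⟩ := hrs
    have hr0 : 0 < r := lt_of_lt_of_le hR0 hr1
    have habs : 0 < |r - ν| := abs_pos.mpr (sub_ne_zero.mpr hrne)
    have hxpos : 0 < r ^ (-(1:ℝ)/3) * |r - ν| :=
      mul_pos (Real.rpow_pos_of_pos hr0 _) habs
    have h2 : (1 + r ^ (-(1:ℝ)/3) * |r - ν|) ^ (-(1:ℝ)/4)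
        ≤ (r ^ (-(1:ℝ)/3) * |r - ν|) ^ (-(1:ℝ)/4) :=
      Real.rpow_le_rpow_of_nonpos hxpos (by linarith) (by norm_num)
    have key : |J r| ≤ C * (r ^ (-(1:ℝ)/4) * |r - ν| ^ (-(1:ℝ)/4)) := by
      refine (hJ r hr0).trans ?_
      calc C * r ^ (-(1:ℝ)/3) * (1 + r ^ (-(1:ℝ)/3) * |r - ν|) ^ (-(1:ℝ)/4)
          ≤ C * r ^ (-(1:ℝ)/3) * ((r ^ (-(1:ℝ)/3) * |r - ν|) ^ (-(1:ℝ)/4)) := by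
            apply mul_le_mul_of_nonneg_left h2 (by positivity)
        _ = C * (r ^ (-(1:ℝ)/4) * |r - ν| ^ (-(1:ℝ)/4)) := by
            rw [Real.mul_rpow (Real.rpow_pos_of_pos hr0 _).le (abs_nonneg _),
              ← Real.rpow_mul hr0.le,
              show (-(1:ℝ)/3 * (-(1:ℝ)/4)) = (1:ℝ)/12 by norm_num]
            have : C * r ^ (-(1:ℝ)/3) * (r ^ ((1:ℝ)/12) * |r - ν| ^ (-(1:ℝ)/4))
                = C * ((r ^ (-(1:ℝ)/3) * r ^ ((1:ℝ)/12)) * |r - ν| ^ (-(1:ℝ)/4)) := by ring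
            rw [this, ← Real.rpow_add hr0,
              show (-(1:ℝ)/3 + (1:ℝ)/12) = -(1:ℝ)/4 by norm_num]
    have hsq : (J r)^2 ≤ (C * (r ^ (-(1:ℝ)/4) * |r - ν| ^ (-(1:ℝ)/4)))^2 := by
      rw [← sq_abs]
      exact pow_le_pow_left₀ (abs_nonneg _) key 2
    refine hsq.trans ?_
    have hr4 : r ^ (-(1:ℝ)/4) * r ^ (-(1:ℝ)/4) = r ^ (-(1:ℝ)/2) := by
      rw [← Real.rpow_add hr0]; norm_num
    have hv4 : |r - ν| ^ (-(1:ℝ)/4) * |r - ν| ^ (-(1:ℝ)/4) = |r - ν| ^ (-(1:ℝ)/2) := by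
      rw [← Real.rpow_add habs]; norm_num
    have expand : (C * (r ^ (-(1:ℝ)/4) * |r - ν| ^ (-(1:ℝ)/4)))^2
        = C^2 * r ^ (-(1:ℝ)/2) * |r - ν| ^ (-(1:ℝ)/2) := by
      calc (C * (r ^ (-(1:ℝ)/4) * |r - ν| ^ (-(1:ℝ)/4)))^2
          = C^2 * (r ^ (-(1:ℝ)/4) * r ^ (-(1:ℝ)/4))
            * (|r - ν| ^ (-(1:ℝ)/4) * |r - ν| ^ (-(1:ℝ)/4)) := by ring
        _ = C^2 * r ^ (-(1:ℝ)/2) * |r - ν| ^ (-(1:ℝ)/2) := by rw [hr4, hv4]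
    rw [expand]
    have hRr : r ^ (-(1:ℝ)/2) ≤ R ^ (-(1:ℝ)/2) :=
      Real.rpow_le_rpow_of_nonpos hR0 hr1 (by norm_num)
    apply mul_le_mul_of_nonneg_right _ (Real.rpow_nonneg (abs_nonneg _) _)
    exact mul_le_mul_of_nonneg_left hRr (by positivity)
  have step1 : (∫ r in s, (J r)^2)
      ≤ ∫ r in s, C^2 * R ^ (-(1:ℝ)/2) * |r - ν| ^ (-(1:ℝ)/2) :=
    integral_mono_of_nonneg (Filter.Eventually.of_forall fun r => sq_nonneg _) hgint hae
  have step2 : (∫ r in s, |r - ν| ^ (-(1:ℝ)/2)) ≤ 4 * Real.sqrt (3*R) := by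
    rcases le_or_gt ν (3*R) with hcase | hcase
    · have hsub : s ⊆ Set.Icc (ν - 3*R) (ν + 3*R) := by
        intro r hr
        exact ⟨by linarith [hr.1], by linarith [hr.2]⟩
      have hbig : IntegrableOn (fun r : ℝ => |r - ν| ^ (-(1:ℝ)/2))
          (Set.Icc (ν - 3*R) (ν + 3*R)) volume := integrableOn_shift ν _ _
      have hmono := setIntegral_mono_set hbig
        (Filter.Eventually.of_forall fun r => Real.rpow_nonneg (abs_nonneg _) _)
        (HasSubset.Subset.eventuallyLE hsub)
      refine hmono.trans ?_
      rw [MeasureTheory.integral_Icc_eq_integral_Ioc,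
        ← intervalIntegral.integral_of_le (by linarith : ν - 3*R ≤ ν + 3*R)]
      rw [intervalIntegral.integral_comp_sub_right (fun u : ℝ => |u| ^ (-(1:ℝ)/2)) ν]
      rw [show ν - 3*R - ν = -(3*R) by ring, show ν + 3*R - ν = 3*R by ring]
      rw [integral_abs_rpow_neg_half (by linarith : (0:ℝ) ≤ 3*R)]
    · have hbound : ∀ r ∈ s, |r - ν| ^ (-(1:ℝ)/2) ≤ R ^ (-(1:ℝ)/2) := by
        intro r hr
        have h1 : R ≤ |r - ν| := by
          rw [abs_of_nonpos (by linarith [hr.2] : r - ν ≤ 0)]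
          linarith [hr.2]
        exact Real.rpow_le_rpow_of_nonpos hR0 h1 (by norm_num)
      have hconst : IntegrableOn (fun _ : ℝ => R ^ (-(1:ℝ)/2)) s volume := by
        apply (integrableOn_const_iff (by simp)).mpr
        right
        rw [hs, Real.volume_Icc]
        exact ENNReal.ofReal_lt_top
      calc (∫ r in s, |r - ν| ^ (-(1:ℝ)/2))
          ≤ ∫ _ in s, R ^ (-(1:ℝ)/2) :=
            setIntegral_mono_on hginta hconst measurableSet_Icc hbound
        _ = R ^ (-(1:ℝ)/2) * R := by
            rw [setIntegral_const, hs,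
              Real.volume_real_Icc_of_le (by linarith : R ≤ 2*R)]
            rw [show 2*R - R = R by ring, smul_eq_mul, mul_comm]
        _ = Real.sqrt R := by
            rw [show (-(1:ℝ)/2) = -(1/2) by norm_num, Real.rpow_neg hR0.le,
              ← Real.sqrt_eq_rpow, inv_mul_eq_div, Real.div_sqrt]
        _ ≤ 4 * Real.sqrt (3*R) := by
            have h1 : Real.sqrt R ≤ Real.sqrt (3*R) :=
              Real.sqrt_le_sqrt (by linarith)
            have h2 : (0:ℝ) ≤ Real.sqrt (3*R) := Real.sqrt_nonneg _
            linarith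
  have hconstnn : (0:ℝ) ≤ C^2 * R ^ (-(1:ℝ)/2) := by positivity
  have step3 : (∫ r in s, (J r)^2) ≤ C^2 * R ^ (-(1:ℝ)/2) * (4 * Real.sqrt (3*R)) := by
    refine step1.trans ?_
    rw [MeasureTheory.integral_const_mul]
    exact mul_le_mul_of_nonneg_left step2 hconstnn
  refine step3.trans ?_
  have hsplit : Real.sqrt (3*R) = Real.sqrt 3 * Real.sqrt R :=
    Real.sqrt_mul (by norm_num) R
  have hRinv : R ^ (-(1:ℝ)/2) * Real.sqrt R = 1 := by
    rw [show (-(1:ℝ)/2) = -(1/2) by norm_num, Real.rpow_neg hR0.le,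
      ← Real.sqrt_eq_rpow]
    exact inv_mul_cancel₀ (Real.sqrt_ne_zero'.mpr hR0)
  have h3 : Real.sqrt 3 ≤ 2 := by
    nlinarith [Real.sq_sqrt (by norm_num : (0:ℝ) ≤ 3), Real.sqrt_nonneg 3]
  have calc1 : C^2 * R ^ (-(1:ℝ)/2) * (4 * Real.sqrt (3*R))
      = 4 * Real.sqrt 3 * C^2 * (R ^ (-(1:ℝ)/2) * Real.sqrt R) := by
    rw [hsplit]; ring
  rw [calc1, hRinv, mul_one]
  nlinarith [sq_nonneg C, Real.sqrt_nonneg 3]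
end
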